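/- Let K be a field with an additive real-valued valuation v, let R ⊆ K be a Noetherian subring such that v(r) ≥ 0 for every nonzero r ∈ R, and let M ⊆ K be a finitely generated R-submodule of K. Then the set {v(m) : m ∈ M, m ≠ 0} is a discrete subset of ℝ; more precisely, for every real number ρ the set {v(m) : m ∈ M, m ≠ 0} ∩ (−∞, ρ] is finite. -/

import Mathlib

section Aux
variable {K : Type*} [Field K] (v : K → WithTop ℝ)
  (hv0 : ∀ x : K, v x = ⊤ ↔ x = 0)
  (hvmul : ∀ x y : K, v (x * y) = v x + v y)
  (hvadd : ∀ x y : K, min (v x) (v y) ≤ v (x + y))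

include hv0 hvmul in
lemma aux_v_one : v 1 = 0 := by
  have h := hvmul 1 1
  rw [one_mul] at h
  obtain ⟨a, ha⟩ := WithTop.ne_top_iff_exists.mp (fun ht => one_ne_zero ((hv0 1).mp ht))
  rw [← ha] at h ⊢
  rw [← WithTop.coe_add, WithTop.coe_eq_coe] at h
  norm_cast
  linarith

include hv0 hvmul in
lemma aux_v_neg (x : K) : v (-x) = v x := by
  have h1 : v (-1 : K) = 0 := by
    have h := hvmul (-1) (-1)
    rw [neg_mul_neg, one_mul, aux_v_one v hv0 hvmul] at h
    obtain ⟨a, ha⟩ := WithTop.ne_top_iff_exists.mp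
      (fun ht => (by norm_num : (-1:K) ≠ 0) ((hv0 (-1)).mp ht))
    rw [← ha]
    rw [← ha, ← WithTop.coe_add, eq_comm, ← WithTop.coe_zero, WithTop.coe_eq_coe] at h
    norm_cast
    linarith
  have := hvmul (-1) x
  rw [neg_one_mul, h1, zero_add] at this
  exact this

include hv0 hvmul hvadd in
lemma aux_v_add_eq_left {x y : K} (hlt : v x < v y) : v (x + y) = v x := by
  refine le_antisymm ?_ ?_
  · have h := hvadd (x + y) (-y)
    rw [add_neg_cancel_right, aux_v_neg v hv0 hvmul] at h
    rcases min_le_iff.mp h with h' | h'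
    · exact h'
    · exact absurd (lt_of_lt_of_le hlt h') (lt_irrefl _)
  · have h := hvadd x y
    rwa [min_eq_left hlt.le] at h

include hv0 hvmul hvadd in
lemma aux_v_add_ne {x y : K} (hne : v x ≠ v y) : v (x + y) = min (v x) (v y) := by
  rcases lt_or_gt_of_ne hne with h | h
  · rw [min_eq_left h.le]; exact aux_v_add_eq_left v hv0 hvmul hvadd h
  · rw [min_eq_right h.le, add_comm]; exact aux_v_add_eq_left v hv0 hvmul hvadd h

include hv0 hvadd in
lemma aux_sum_le {ι : Type*} (s : Finset ι) (f : ι → K) (b : WithTop ℝ)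
    (hb : ∀ i ∈ s, b ≤ v (f i)) : b ≤ v (∑ i ∈ s, f i) := by
  induction s using Finset.cons_induction with
  | empty =>
      simp only [Finset.sum_empty]
      rw [(hv0 0).mpr rfl]; exact le_top
  | cons a s ha ih =>
      rw [Finset.sum_cons]
      refine le_trans (le_min (hb a (Finset.mem_cons_self a s))
        (ih fun i hi => hb i (Finset.mem_cons_of_mem hi))) (hvadd _ _)

include hv0 hvmul hvadd in
lemma aux_sum_inf {ι : Type*} (s : Finset ι) (f : ι → K)
    (hnt : ∀ i ∈ s, v (f i) ≠ ⊤)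
    (hinj : ∀ i ∈ s, ∀ j ∈ s, v (f i) = v (f j) → i = j)
    (hne : s.Nonempty) :
    v (∑ i ∈ s, f i) = s.inf (fun i => v (f i)) := by
  induction s using Finset.cons_induction with
  | empty => exact absurd hne (by simp)
  | cons a s ha ih =>
      rcases s.eq_empty_or_nonempty with rfl | hs
      · simp
      · have hsum := ih (fun i hi => hnt i (Finset.mem_cons_of_mem hi))
          (fun i hi j hj hij => hinj i (Finset.mem_cons_of_mem hi) j
            (Finset.mem_cons_of_mem hj) hij) hs
        obtain ⟨i0, hi0, hinf⟩ := Finset.exists_mem_eq_inf s hs (fun i => v (f i))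
        have hane : v (f a) ≠ v (∑ i ∈ s, f i) := by
          rw [hsum, hinf]
          intro hcontra
          have := hinj a (Finset.mem_cons_self a s) i0 (Finset.mem_cons_of_mem hi0) hcontra
          exact ha (this ▸ hi0)
        rw [Finset.sum_cons, aux_v_add_ne v hv0 hvmul hvadd hane, hsum, Finset.inf_cons]

end Aux

section Aux2
variable {K : Type*} [Field K] (v : K → WithTop ℝ)
  (hv0 : ∀ x : K, v x = ⊤ ↔ x = 0)
  (hvmul : ∀ x y : K, v (x * y) = v x + v y)
  (hvadd : ∀ x y : K, min (v x) (v y) ≤ v (x + y))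
  (R : Subring K)
  (hpos : ∀ r ∈ R, r ≠ 0 → 0 ≤ v r)

include hv0 hvmul hvadd hpos in
/-- The elements of a submodule `N` with valuation at least `t`. -/
def Mtv (N : Submodule R K) (t : ℝ) : Submodule R K where
  carrier := {m | m ∈ N ∧ (t : WithTop ℝ) ≤ v m}
  add_mem' := by
    rintro x y ⟨hxN, hxv⟩ ⟨hyN, hyv⟩
    exact ⟨N.add_mem hxN hyN, le_trans (le_min hxv hyv) (hvadd x y)⟩
  zero_mem' := ⟨N.zero_mem, by rw [(hv0 0).mpr rfl]; exact le_top⟩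
  smul_mem' := by
    rintro c x ⟨hxN, hxv⟩
    refine ⟨N.smul_mem c hxN, ?_⟩
    show (t : WithTop ℝ) ≤ v (↑c * x)
    rcases eq_or_ne (c : K) 0 with hc | hc
    · rw [hc, zero_mul, (hv0 0).mpr rfl]; exact le_top
    · rw [hvmul]
      calc (t : WithTop ℝ) ≤ v x := hxv
        _ = 0 + v x := (zero_add _).symm
        _ ≤ v ↑c + v x := add_le_add (hpos c c.2 hc) le_rfl

lemma Mtv_mem {N : Submodule R K} {t : ℝ} {x : K} :
    x ∈ Mtv v hv0 hvmul hvadd R hpos N t ↔ x ∈ N ∧ (t : WithTop ℝ) ≤ v x := Iff.rfl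

include hv0 hvmul hvadd hpos in
lemma exists_delta (hR : IsNoetherianRing R) :
    ∃ δ : ℝ, 0 < δ ∧ ∀ r : R, 0 < v (r : K) → (δ : WithTop ℝ) ≤ v (r : K) := by
  by_contra hcon
  push_neg at hcon
  have step : ∀ p : ℝ, 0 < p → ∃ q : ℝ, 0 < q ∧ q < p ∧ ∃ r : R, v (r : K) = (q : WithTop ℝ) := by
    intro p hp
    obtain ⟨r, hr0, hrp⟩ := hcon p hp
    have hne : v (r : K) ≠ ⊤ := fun ht => by rw [ht] at hrp; exact absurd hrp (by simp)
    obtain ⟨q, hq⟩ := WithTop.ne_top_iff_exists.mp hne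
    refine ⟨q, ?_, ?_, r, hq.symm⟩
    · rw [← hq] at hr0; exact_mod_cast hr0
    · rw [← hq] at hrp; exact_mod_cast hrp
  classical
  have f : ∀ p : ℝ, 0 < p →
      {q : ℝ // 0 < q ∧ q < p ∧ ∃ r : R, v (r : K) = (q : WithTop ℝ)} :=
    fun p hp => ⟨(step p hp).choose, (step p hp).choose_spec⟩
  let t : ℕ → {q : ℝ // 0 < q ∧ ∃ r : R, v (r : K) = (q : WithTop ℝ)} :=
    fun n => Nat.rec ⟨(f 1 one_pos).1, (f 1 one_pos).2.1, (f 1 one_pos).2.2.2⟩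
      (fun _ prev => ⟨(f prev.1 prev.2.1).1, (f prev.1 prev.2.1).2.1,
        (f prev.1 prev.2.1).2.2.2⟩) n
  have tdec : ∀ n, (t (n + 1)).1 < (t n).1 := fun n => (f (t n).1 (t n).2.1).2.2.1
  -- ideals
  let I : ℝ → Ideal R := fun s =>
    { carrier := {r : R | (s : WithTop ℝ) ≤ v (r : K)}
      add_mem' := by
        intro a b ha hb
        exact le_trans (le_min ha hb) (by exact_mod_cast hvadd (a : K) (b : K))
      zero_mem' := by
        show (s : WithTop ℝ) ≤ v ((0 : R) : K)
        rw [ZeroMemClass.coe_zero, (hv0 0).mpr rfl]; exact le_top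
      smul_mem' := by
        intro c x hx
        show (s : WithTop ℝ) ≤ v ((c * x : R) : K)
        rcases eq_or_ne (c : K) 0 with hc | hc
        · have : ((c * x : R) : K) = 0 := by push_cast; rw [hc, zero_mul]
          rw [this, (hv0 0).mpr rfl]; exact le_top
        · have : ((c * x : R) : K) = (c : K) * (x : K) := by push_cast; ring
          rw [this, hvmul]
          calc (s : WithTop ℝ) ≤ v (x : K) := hx
            _ = 0 + v (x : K) := (zero_add _).symm
            _ ≤ v (c : K) + v (x : K) := add_le_add (hpos c c.2 hc) le_rfl }
  have Imem : ∀ (s : ℝ) (r : R), r ∈ I s ↔ (s : WithTop ℝ) ≤ v (r : K) := fun _ _ => Iff.rfl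
  have Imono : ∀ {s s' : ℝ}, s' ≤ s → I s ≤ I s' := by
    intro s s' hss r hr
    rw [Imem] at hr ⊢
    exact le_trans (by exact_mod_cast hss) hr
  have hchain : ∃ n, ∀ m, n ≤ m → (fun n => I (t n).1) n = (fun n => I (t n).1) m := by
    haveI := hR
    exact monotone_stabilizes_iff_noetherian.mpr hR
      ⟨fun n => I (t n).1, fun a b hab => by
        induction hab with
        | refl => exact le_refl _
        | step h ih => exact le_trans ih (Imono (tdec _).le)⟩
  obtain ⟨n, hn⟩ := hchain
  obtain ⟨r, hr⟩ := (t (n + 1)).2.2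
  have hmem : r ∈ I (t (n + 1)).1 := (Imem _ _).mpr (le_of_eq hr.symm)
  have heq : I (t n).1 = I (t (n + 1)).1 := hn (n + 1) (Nat.le_succ n)
  have hmem2 : r ∈ I (t n).1 := heq ▸ hmem
  have : ((t n).1 : WithTop ℝ) ≤ v (r : K) := (Imem _ _).mp hmem2
  rw [hr] at this
  exact absurd (tdec n) (not_lt.mpr (by exact_mod_cast this))

end Aux2

section Main
variable {K : Type*} [Field K] (v : K → WithTop ℝ)
  (hv0 : ∀ x : K, v x = ⊤ ↔ x = 0)
  (hvmul : ∀ x y : K, v (x * y) = v x + v y)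
  (hvadd : ∀ x y : K, min (v x) (v y) ≤ v (x + y))
  (R : Subring K)
  (hpos : ∀ r ∈ R, r ≠ 0 → 0 ≤ v r)

include hv0 hvmul hvadd hpos in
lemma window_finite (hR : IsNoetherianRing R) (M : Submodule R K) (hM : M.FG)
    (δ : ℝ) (hδpos : 0 < δ)
    (hδ : ∀ r : R, 0 < v (r : K) → (δ : WithTop ℝ) ≤ v (r : K)) (t : ℝ) :
    {r : ℝ | (∃ m ∈ M, m ≠ 0 ∧ v m = (r : WithTop ℝ)) ∧ t ≤ r ∧ r < t + δ}.Finite := by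
  classical
  haveI := hR
  haveI : IsNoetherian R ↥M := isNoetherian_of_fg_of_noetherian M hM
  by_contra hfin
  have hinf : {r : ℝ | (∃ m ∈ M, m ≠ 0 ∧ v m = (r : WithTop ℝ)) ∧ t ≤ r ∧ r < t + δ}.Infinite :=
    hfin
  let e := Set.Infinite.natEmbedding _ hinf
  have einj : Function.Injective (fun n => ((e n : ℝ))) :=
    fun a b hab => e.injective (Subtype.ext hab)
  obtain ⟨g, hg⟩ := exists_increasing_or_nonincreasing_subseq (· < · : ℝ → ℝ → Prop)
    (fun n => ((e n : ℝ)))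
  set h : ℕ → ℝ := fun n => ((e (g n) : ℝ)) with hh
  have hinj : Function.Injective h := fun a b hab => g.injective (einj hab)
  have hmemS : ∀ n, (∃ m ∈ M, m ≠ 0 ∧ v m = ((h n : ℝ) : WithTop ℝ)) ∧ t ≤ h n ∧ h n < t + δ :=
    fun n => (e (g n)).2
  choose x hxM hx0 hxv using fun n => (hmemS n).1
  have hrange : ∀ n, t ≤ h n ∧ h n < t + δ := fun n => (hmemS n).2
  have hmono : StrictMono h ∨ StrictAnti h := by
    rcases hg with hg | hg
    · left; intro a b hab; exact hg a b hab
    · right; intro a b hab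
      rcases lt_trichotomy (h a) (h b) with hlt | heq | hgt
      · exact absurd hlt (hg a b hab)
      · exact absurd (hinj heq) (ne_of_lt hab)
      · exact hgt
  rcases hmono with hmono | hanti
  · -- strictly increasing case
    set W : Submodule R K := Mtv v hv0 hvmul hvadd R hpos M (t + δ) with hW
    set A : ℕ → Submodule R K := fun n =>
      W ⊔ Submodule.span R (Set.range fun i : Fin (n + 1) => x i) with hA
    have hWM : W ≤ M := fun y hy => hy.1
    have hAM : ∀ n, A n ≤ M := by
      intro n
      refine sup_le hWM (Submodule.span_le.mpr ?_)
      rintro _ ⟨i, rfl⟩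
      exact hxM i
    have hxnotin : ∀ n, x (n + 1) ∉ A n := by
      intro n hxA
      rw [hA, Submodule.mem_sup] at hxA
      obtain ⟨w, hw, z, hz, hwz⟩ := hxA
      rw [Submodule.mem_span_range_iff_exists_fun] at hz
      obtain ⟨c, hc⟩ := hz
      have hvw : ((t + δ : ℝ) : WithTop ℝ) ≤ v w := hw.2
      have hvx : v (x (n + 1)) = ((h (n + 1) : ℝ) : WithTop ℝ) := hxv (n + 1)
      have hz_eq : z = x (n + 1) - w := by rw [← hwz]; ring
      have hvz : v z = ((h (n + 1) : ℝ) : WithTop ℝ) := by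
        have hlt : v (x (n + 1)) < v (-w) := by
          rw [aux_v_neg v hv0 hvmul, hvx]
          calc ((h (n+1) : ℝ) : WithTop ℝ) < ((t + δ : ℝ) : WithTop ℝ) := by
                exact_mod_cast (hrange (n+1)).2
            _ ≤ v w := hvw
        rw [hz_eq, sub_eq_add_neg, aux_v_add_eq_left v hv0 hvmul hvadd hlt, hvx]
      set F : Fin (n + 1) → K := fun i => (c i : K) * x i with hF
      have hzF : z = ∑ i, F i := by
        rw [← hc]
        rfl
      set sU : Finset (Fin (n + 1)) :=
        Finset.univ.filter (fun i => v ((c i : K)) = 0) with hsU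
      have hsplit : z = (∑ i ∈ sU, F i) + ∑ i ∈ Finset.univ.filter
          (fun i => ¬ v ((c i : K)) = 0), F i := by
        rw [hzF, Finset.sum_filter_add_sum_filter_not]
      have hz2 : ((t + δ : ℝ) : WithTop ℝ) ≤ v (∑ i ∈ Finset.univ.filter
          (fun i => ¬ v ((c i : K)) = 0), F i) := by
        refine aux_sum_le v hv0 hvadd _ _ _ ?_
        intro i hi
        rw [Finset.mem_filter] at hi
        rcases eq_or_ne ((c i : K)) 0 with hci | hci
        · have : F i = 0 := by rw [hF]; simp [hci]
          rw [this, (hv0 0).mpr rfl]; exact le_top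
        · have h0 : 0 < v ((c i : K)) :=
            lt_of_le_of_ne (hpos _ (c i).2 hci) (Ne.symm hi.2)
          have hδi : (δ : WithTop ℝ) ≤ v ((c i : K)) := hδ (c i) h0
          have hti : ((t : ℝ) : WithTop ℝ) ≤ v (x i) := by
            rw [hxv i]; exact_mod_cast (hrange i).1
          calc ((t + δ : ℝ) : WithTop ℝ) = ((δ : ℝ) : WithTop ℝ) + ((t : ℝ) : WithTop ℝ) := by
                rw [← WithTop.coe_add]; norm_num [add_comm]
            _ ≤ v ((c i : K)) + v (x i) := add_le_add hδi hti
            _ = v (F i) := (hvmul _ _).symm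
      rcases sU.eq_empty_or_nonempty with hsUe | hsUne
      · rw [hsUe, Finset.sum_empty, zero_add] at hsplit
        rw [hsplit] at hvz
        rw [hvz] at hz2
        have : t + δ ≤ h (n + 1) := by exact_mod_cast hz2
        exact absurd (hrange (n+1)).2 (not_lt.mpr this)
      · have hFval : ∀ i ∈ sU, v (F i) = ((h i : ℝ) : WithTop ℝ) := by
          intro i hi
          rw [Finset.mem_filter] at hi
          rw [hF]
          show v ((c i : K) * x i) = _
          rw [hvmul, hi.2, zero_add, hxv i]
        have hz1 : v (∑ i ∈ sU, F i) = sU.inf (fun i => v (F i)) := by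
          refine aux_sum_inf v hv0 hvmul hvadd _ _ ?_ ?_ hsUne
          · intro i hi; rw [hFval i hi]; exact WithTop.coe_ne_top
          · intro i hi j hj hij
            rw [hFval i hi, hFval j hj] at hij
            exact Fin.ext (hmono.injective (by exact_mod_cast hij))
        obtain ⟨i0, hi0, hinf0⟩ := Finset.exists_mem_eq_inf sU hsUne (fun i => v (F i))
        have hvz1 : v (∑ i ∈ sU, F i) = ((h i0 : ℝ) : WithTop ℝ) := by
          rw [hz1, hinf0, hFval i0 hi0]
        have hlt12 : v (∑ i ∈ sU, F i) < v (∑ i ∈ Finset.univ.filter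
            (fun i => ¬ v ((c i : K)) = 0), F i) := by
          rw [hvz1]
          calc ((h i0 : ℝ) : WithTop ℝ) < ((t + δ : ℝ) : WithTop ℝ) := by
                exact_mod_cast (hrange i0).2
            _ ≤ _ := hz2
        have : v z = ((h i0 : ℝ) : WithTop ℝ) := by
          rw [hsplit, aux_v_add_eq_left v hv0 hvmul hvadd hlt12, hvz1]
        rw [hvz] at this
        have heq : h (n + 1) = h i0 := by exact_mod_cast this
        have : (i0 : ℕ) < n + 1 := i0.2
        exact absurd heq (ne_of_gt (hmono this))
    have hCmono : Monotone (fun n => (A n).comap M.subtype) := by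
      intro a b hab
      refine Submodule.comap_mono (sup_le_sup_left (Submodule.span_mono ?_) W)
      rintro _ ⟨i, rfl⟩
      exact ⟨⟨(i : ℕ), lt_of_lt_of_le i.2 (by omega)⟩, rfl⟩
    obtain ⟨n0, hn0⟩ := monotone_stabilizes_iff_noetherian.mpr
      (inferInstance : IsNoetherian R ↥M) ⟨fun n => (A n).comap M.subtype, hCmono⟩
    have hxin : (⟨x (n0 + 1), hxM (n0 + 1)⟩ : ↥M) ∈ (A (n0 + 1)).comap M.subtype := by
      show x (n0 + 1) ∈ A (n0 + 1)
      refine Submodule.mem_sup_right (Submodule.subset_span ?_)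
      exact ⟨⟨n0 + 1, by omega⟩, rfl⟩
    have heqA : (A n0).comap M.subtype = (A (n0 + 1)).comap M.subtype :=
      hn0 (n0 + 1) (Nat.le_succ n0)
    rw [← heqA] at hxin
    exact hxnotin n0 hxin
  · -- strictly decreasing case
    set C : ℕ → Submodule R ↥M := fun n =>
      (Mtv v hv0 hvmul hvadd R hpos M (h n)).comap M.subtype with hC
    have hCmono : Monotone C := by
      intro a b hab m hm
      obtain ⟨hm1, hm2⟩ := hm
      exact ⟨hm1, le_trans (by exact_mod_cast (hanti.antitone hab)) hm2⟩
    obtain ⟨n0, hn0⟩ := monotone_stabilizes_iff_noetherian.mpr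
      (inferInstance : IsNoetherian R ↥M) ⟨C, hCmono⟩
    have hxin : (⟨x (n0 + 1), hxM (n0 + 1)⟩ : ↥M) ∈ C (n0 + 1) := by
      refine ⟨hxM (n0 + 1), ?_⟩
      show ((h (n0 + 1) : ℝ) : WithTop ℝ) ≤ v (x (n0 + 1))
      rw [hxv (n0 + 1)]
    have heqC : C n0 = C (n0 + 1) := hn0 (n0 + 1) (Nat.le_succ n0)
    rw [← heqC] at hxin
    have : ((h n0 : ℝ) : WithTop ℝ) ≤ v (x (n0 + 1)) := hxin.2
    rw [hxv (n0 + 1)] at this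
    have : h n0 ≤ h (n0 + 1) := by exact_mod_cast this
    exact absurd (hanti (Nat.lt_succ_self n0)) (not_lt.mpr this)

end Main

/-- Let `K` be a field with an additive real-valued valuation `v`, let
`R ⊆ K` be a Noetherian subring on whose nonzero elements `v` is nonnegative, and let
`M ⊆ K` be a finitely generated `R`-submodule of `K`.  Then `{v m : m ∈ M, m ≠ 0}` is a
discrete subset of `ℝ`: for every `ρ : ℝ` the set `{v m : m ∈ M, m ≠ 0} ∩ (−∞, ρ]` is
finite. -/
theorem statement6 {K : Type*} [Field K]
    (v : K → WithTop ℝ)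
    (hv0 : ∀ x : K, v x = ⊤ ↔ x = 0)
    (hvmul : ∀ x y : K, v (x * y) = v x + v y)
    (hvadd : ∀ x y : K, min (v x) (v y) ≤ v (x + y))
    (R : Subring K) (hR : IsNoetherianRing R)
    (hpos : ∀ r ∈ R, r ≠ 0 → 0 ≤ v r)
    (M : Submodule R K) (hM : M.FG) :
    ∀ ρ : ℝ,
      {r : ℝ | (∃ m ∈ M, m ≠ 0 ∧ v m = (r : WithTop ℝ)) ∧ r ≤ ρ}.Finite := by
  intro ρ
  classical
  -- lower bound on values of nonzero elements of M
  obtain ⟨s, hs⟩ := id hM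
  have hlow : ∀ m ∈ M, (s.inf fun y => v y) ≤ v m := by
    intro m hm
    rw [← hs] at hm
    induction hm using Submodule.span_induction with
    | mem y hy => exact Finset.inf_le hy
    | zero => rw [(hv0 0).mpr rfl]; exact le_top
    | add y z _ _ hy hz => exact le_trans (le_min hy hz) (hvadd y z)
    | smul r y _ hy =>
        show (s.inf fun y => v y) ≤ v ((r : K) * y)
        rcases eq_or_ne (r : K) 0 with hr | hr
        · rw [hr, zero_mul, (hv0 0).mpr rfl]; exact le_top
        · rw [hvmul]
          calc (s.inf fun y => v y) ≤ v y := hy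
            _ = 0 + v y := (zero_add _).symm
            _ ≤ v (r : K) + v y := add_le_add (hpos r r.2 hr) le_rfl
  obtain ⟨c, hc⟩ : ∃ c : ℝ, ∀ m ∈ M, m ≠ 0 → ((c : ℝ) : WithTop ℝ) ≤ v m := by
    rcases eq_or_ne (s.inf fun y => v y) ⊤ with htop | hne
    · refine ⟨0, fun m hm hm0 => absurd ?_ hm0⟩
      have := hlow m hm
      rw [htop, top_le_iff] at this
      exact (hv0 m).mp this
    · obtain ⟨c, hc⟩ := WithTop.ne_top_iff_exists.mp hne
      exact ⟨c, fun m hm _ => by rw [hc]; exact hlow m hm⟩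
  obtain ⟨δ, hδpos, hδ⟩ := exists_delta v hv0 hvmul hvadd R hpos hR
  have hwin := window_finite v hv0 hvmul hvadd R hpos hR M hM δ hδpos hδ
  refine Set.Finite.subset (Set.Finite.biUnion (Finset.range (Nat.floor ((ρ - c)/δ) + 1) :
    Finset ℕ).finite_toSet (fun k _ => hwin (c + k * δ))) ?_
  rintro r ⟨⟨m, hm, hm0, hvm⟩, hrρ⟩
  have hcr : c ≤ r := by
    have := hc m hm hm0
    rw [hvm] at this
    exact_mod_cast this
  set k := Nat.floor ((r - c)/δ) with hk
  have hk1 : (k : ℝ) ≤ (r - c)/δ := Nat.floor_le (div_nonneg (by linarith) hδpos.le)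
  have hk2 : (r - c)/δ < k + 1 := Nat.lt_floor_add_one _
  have hkmem : k ∈ Finset.range (Nat.floor ((ρ - c)/δ) + 1) := by
    rw [Finset.mem_range, Nat.lt_succ_iff]
    exact Nat.floor_le_floor ((div_le_div_iff_of_pos_right hδpos).mpr (by linarith))
  refine Set.mem_biUnion (Finset.mem_coe.mpr hkmem) ?_
  have hb1 : (k : ℝ) * δ ≤ r - c := (le_div_iff₀ hδpos).mp hk1
  have hb2 : r - c < ((k : ℝ) + 1) * δ := (div_lt_iff₀ hδpos).mp hk2
  exact ⟨⟨m, hm, hm0, hvm⟩, by linarith, by linarith⟩
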